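/- Let X and Y be independent real-valued random variables on a probability space (Ω, 𝓐, P), let 𝐅(x) := P(X ≤ x), let 𝐆(y) := P(Y ≤ y) be continuous, and assume p := P(X ≤ Y) > 0. Define C(x) := P(X ≤ x and x ≤ Y | X ≤ Y). Then for every x ∈ ℝ, C(x) = p^{−1} 𝐅(x)(1 − 𝐆(x)), and moreover C(x) = F(x) − G(x), where F(x) := P(X ≤ x | X ≤ Y) and G(x) := P(Y ≤ x | X ≤ Y). -/

import Mathlib

open Filter Set MeasureTheory ProbabilityTheory

/-- Let `X`, `Y` be independent real random variables on `(Ω, 𝓐, P)`,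
`F x = P(X ≤ x)`, `G y = P(Y ≤ y)` continuous, `p = P(X ≤ Y) > 0`, and
`C x = P(X ≤ x ∧ x ≤ Y ∣ X ≤ Y)`. Then `C x = p⁻¹ F x (1 - G x)` and
`C x = Fobs x - Gobs x` where `Fobs x = P(X ≤ x ∣ X ≤ Y)` and
`Gobs x = P(Y ≤ x ∣ X ≤ Y)`. -/
theorem stmt_11 {Ω : Type*} [MeasurableSpace Ω] (P : Measure Ω) [IsProbabilityMeasure P]
    (X Y : Ω → ℝ) (hX : Measurable X) (hY : Measurable Y)
    (hindep : IndepFun X Y P)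
    (F G : ℝ → ℝ)
    (hF : ∀ x, F x = (P {ω | X ω ≤ x}).toReal)
    (hG : ∀ y, G y = (P {ω | Y ω ≤ y}).toReal)
    (hGcont : Continuous G)
    (p : ℝ) (hp : p = (P {ω | X ω ≤ Y ω}).toReal) (hppos : 0 < p)
    (C Fobs Gobs : ℝ → ℝ)
    (hC : ∀ x, C x = (P {ω | (X ω ≤ x ∧ x ≤ Y ω) ∧ X ω ≤ Y ω}).toReal / p)
    (hFobs : ∀ x, Fobs x = (P {ω | X ω ≤ x ∧ X ω ≤ Y ω}).toReal / p)
    (hGobs : ∀ x, Gobs x = (P {ω | Y ω ≤ x ∧ X ω ≤ Y ω}).toReal / p) :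
    ∀ x : ℝ, C x = p⁻¹ * (F x * (1 - G x)) ∧ C x = Fobs x - Gobs x := by
  intro x
  -- continuity of G implies P(Y = x) = 0
  have hnull : P {ω | Y ω = x} = 0 := by
    have hle : ∀ n : ℕ, (P {ω | Y ω = x}).toReal ≤ G x - G (x - (n+1 : ℝ)⁻¹) := by
      intro n
      have hsub : {ω | Y ω ≤ x - (n+1 : ℝ)⁻¹} ⊆ {ω | Y ω ≤ x} := by
        intro ω hω
        have : (0:ℝ) < (n+1 : ℝ)⁻¹ := by positivity
        simp only [mem_setOf_eq] at *
        linarith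
      have hdm : P ({ω | Y ω ≤ x} \ {ω | Y ω ≤ x - (n+1 : ℝ)⁻¹})
          = P {ω | Y ω ≤ x} - P {ω | Y ω ≤ x - (n+1 : ℝ)⁻¹} :=
        measure_diff hsub (measurableSet_le hY measurable_const).nullMeasurableSet
          (measure_ne_top P _)
      have hmem : {ω | Y ω = x} ⊆ {ω | Y ω ≤ x} \ {ω | Y ω ≤ x - (n+1 : ℝ)⁻¹} := by
        intro ω hω
        have h0 : (0:ℝ) < (n+1 : ℝ)⁻¹ := by positivity
        have hYx : Y ω = x := hω
        refine ⟨le_of_eq hYx, fun hcon => ?_⟩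
        have hle : Y ω ≤ x - (n+1:ℝ)⁻¹ := hcon
        linarith
      calc (P {ω | Y ω = x}).toReal
          ≤ (P ({ω | Y ω ≤ x} \ {ω | Y ω ≤ x - (n+1 : ℝ)⁻¹})).toReal := by
            apply ENNReal.toReal_mono (measure_ne_top P _) (measure_mono hmem)
        _ = G x - G (x - (n+1 : ℝ)⁻¹) := by
            rw [hdm, ENNReal.toReal_sub_of_le (measure_mono hsub) (measure_ne_top P _),
              hG, hG]
    have htend : Tendsto (fun n : ℕ => G x - G (x - (n+1 : ℝ)⁻¹)) atTop (nhds 0) := by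
      have h1 : Tendsto (fun n : ℕ => x - (n+1 : ℝ)⁻¹) atTop (nhds x) := by
        have : Tendsto (fun n : ℕ => 1 / ((n : ℝ) + 1)) atTop (nhds 0) :=
          tendsto_one_div_add_atTop_nhds_zero_nat
        simp only [one_div] at this
        have := tendsto_const_nhds (x := x) (f := atTop (α := ℕ)).sub this
        simpa using this
      have := ((hGcont.tendsto x).comp h1)
      have h2 := (tendsto_const_nhds (x := G x) (f := atTop (α := ℕ))).sub this
      simpa using h2
    have hle0 : (P {ω | Y ω = x}).toReal ≤ 0 := le_of_tendsto_of_tendsto'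
      tendsto_const_nhds htend hle
    have h0 : (P {ω | Y ω = x}).toReal = 0 :=
      le_antisymm hle0 ENNReal.toReal_nonneg
    exact (ENNReal.toReal_eq_zero_iff _).mp h0 |>.resolve_right (measure_ne_top P _)
  -- P(Y ≤ x) = P(Y < x)
  have hIicIio : P {ω | Y ω ≤ x} = P {ω | Y ω < x} := by
    have : {ω | Y ω ≤ x} = {ω | Y ω < x} ∪ {ω | Y ω = x} := by
      ext ω; simp [le_iff_lt_or_eq]
    rw [this]
    refine le_antisymm ?_ (measure_mono subset_union_left)
    calc P ({ω | Y ω < x} ∪ {ω | Y ω = x}) ≤ P {ω | Y ω < x} + P {ω | Y ω = x} :=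
          measure_union_le _ _
      _ = P {ω | Y ω < x} := by rw [hnull, add_zero]
  -- P(x ≤ Y) = 1 - P(Y ≤ x)
  have hIci : P {ω | x ≤ Y ω} = 1 - P {ω | Y ω ≤ x} := by
    have hc : {ω | x ≤ Y ω} = {ω | Y ω < x}ᶜ := by
      ext ω; simp [not_lt]
    rw [hc, measure_compl (measurableSet_lt hY measurable_const) (measure_ne_top P _),
      measure_univ, hIicIio]
  have hGle1 : P {ω | Y ω ≤ x} ≤ 1 := prob_le_one
  -- Part 1
  have hEset : {ω | (X ω ≤ x ∧ x ≤ Y ω) ∧ X ω ≤ Y ω} = X ⁻¹' (Iic x) ∩ Y ⁻¹' (Ici x) := by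
    ext ω
    simp only [mem_setOf_eq, mem_inter_iff, mem_preimage, mem_Iic, mem_Ici]
    constructor
    · rintro ⟨⟨h1, h2⟩, _⟩; exact ⟨h1, h2⟩
    · rintro ⟨h1, h2⟩; exact ⟨⟨h1, h2⟩, le_trans h1 h2⟩
  have hprod : P {ω | (X ω ≤ x ∧ x ≤ Y ω) ∧ X ω ≤ Y ω}
      = P {ω | X ω ≤ x} * P {ω | x ≤ Y ω} := by
    rw [hEset, hindep.measure_inter_preimage_eq_mul _ _ measurableSet_Iic measurableSet_Ici]
    rfl
  have part1 : C x = p⁻¹ * (F x * (1 - G x)) := by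
    rw [hC, hprod, hIci, ENNReal.toReal_mul,
      ENNReal.toReal_sub_of_le hGle1 ENNReal.one_ne_top, ENNReal.toReal_one, hF, hG]
    ring
  refine ⟨part1, ?_⟩
  -- Part 2
  set A := {ω | X ω ≤ x ∧ X ω ≤ Y ω} with hA
  set B := {ω | Y ω ≤ x ∧ X ω ≤ Y ω} with hB
  set E := {ω | (X ω ≤ x ∧ x ≤ Y ω) ∧ X ω ≤ Y ω} with hE
  have hBA : B ⊆ A := by
    rintro ω ⟨h1, h2⟩
    exact ⟨le_trans h2 h1, h2⟩
  have hBmeas : MeasurableSet B :=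
    (measurableSet_le hY measurable_const).inter (measurableSet_le hX hY)
  have hPE : P E = P A - P B := by
    have hdiff : P (A \ B) = P A - P B :=
      measure_diff hBA hBmeas.nullMeasurableSet (measure_ne_top P _)
    have h1 : A \ B ⊆ E := by
      rintro ω ⟨⟨h1, h2⟩, h3⟩
      have hxY : x ≤ Y ω := by
        by_contra h
        push_neg at h
        exact h3 ⟨le_of_lt h, h2⟩
      exact ⟨⟨h1, hxY⟩, h2⟩
    have h2 : E ⊆ (A \ B) ∪ {ω | Y ω = x} := by
      rintro ω ⟨⟨h1, h2⟩, h3⟩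
      by_cases hyx : Y ω ≤ x
      · exact Or.inr (le_antisymm hyx h2)
      · exact Or.inl ⟨⟨h1, h3⟩, fun hb => hyx hb.1⟩
    have hle1 : P E ≤ P (A \ B) := by
      calc P E ≤ P ((A \ B) ∪ {ω | Y ω = x}) := measure_mono h2
        _ ≤ P (A \ B) + P {ω | Y ω = x} := measure_union_le _ _
        _ = P (A \ B) := by rw [hnull, add_zero]
    rw [← hdiff]
    exact le_antisymm hle1 (measure_mono h1)
  rw [hC, hFobs, hGobs, hPE,
    ENNReal.toReal_sub_of_le (measure_mono hBA) (measure_ne_top P _), sub_div]
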